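/- For all A, B ∈ ℝ^{mn×mn}, the bilinear computation f satisfies ‖f(A,B) − A·B‖ ≤ ‖A‖ · ‖B‖ · ‖Y − X‖, where ‖·‖ denotes the Frobenius norm. -/
import Mathlib


open scoped BigOperators Matrix

/-- Frobenius norm of a real matrix. -/
noncomputable def frob {ι κ : Type*} [Fintype ι] [Fintype κ] (A : Matrix ι κ ℝ) : ℝ :=
  Real.sqrt (∑ i, ∑ j, (A i j) ^ 2)

/-- Frobenius norm of a 6-mode tensor. -/
noncomputable def frob6 {n : ℕ} (T : Fin n → Fin n → Fin n → Fin n → Fin n → Fin n → ℝ) : ℝ :=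
  Real.sqrt (∑ k, ∑ l, ∑ k', ∑ l', ∑ i, ∑ j, (T k l k' l' i j) ^ 2)

/-- The 6-mode tensor Y with entries y_{klk'l'ij} = Σ_r u_{klr} v_{k'l'r} w_{ijr}. -/
noncomputable def Ytens {n R : ℕ} (U V W : Fin n → Fin n → Fin R → ℝ) :
    Fin n → Fin n → Fin n → Fin n → Fin n → Fin n → ℝ :=
  fun k l k' l' i j => ∑ r, U k l r * V k' l' r * W i j r

/-- The exact matrix-multiplication tensor X, x_{klk'l'ij} = δ_{ki} δ_{l'j} δ_{lk'}. -/
def Xtens (n : ℕ) : Fin n → Fin n → Fin n → Fin n → Fin n → Fin n → ℝ :=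
  fun k l k' l' i j =>
    (if k = i then (1 : ℝ) else 0) * (if l' = j then (1 : ℝ) else 0) *
      (if l = k' then (1 : ℝ) else 0)

/-- The block bilinear computation f on (mn)×(mn) matrices indexed by Fin n × Fin m
(first index: block position, second index: position within the m×m block). -/
noncomputable def blinf {n R m : ℕ} (U V W : Fin n → Fin n → Fin R → ℝ)
    (A B : Matrix (Fin n × Fin m) (Fin n × Fin m) ℝ) :
    Matrix (Fin n × Fin m) (Fin n × Fin m) ℝ :=
  fun p q => ∑ r, W p.1 q.1 r *
    ∑ z, (∑ k, ∑ l, U k l r * A (k, p.2) (l, z)) *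
         (∑ k', ∑ l', V k' l' r * B (k', z) (l', q.2))

/-- κ = n⁻³ Σ_{i,j,l} (1 − Σ_r u_{ilr} v_{ljr} w_{ijr}). -/
noncomputable def kappa {n R : ℕ} (U V W : Fin n → Fin n → Fin R → ℝ) : ℝ :=
  ((n : ℝ) ^ 3)⁻¹ * ∑ i, ∑ j, ∑ l, (1 - ∑ r, U i l r * V l j r * W i j r)

/-- M = P S : block matrix with m×m block s(j)·I_m at block position (π(j), j). -/
def Mmat {n : ℕ} (m : ℕ) (s : Fin n → ℝ) (π : Equiv.Perm (Fin n)) :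
    Matrix (Fin n × Fin m) (Fin n × Fin m) ℝ :=
  fun p q => if p.1 = π q.1 ∧ p.2 = q.2 then s q.1 else 0

/-- The randomized bilinear computation f̂(A,B) = (1−κ)⁻¹ M₁ᵀ f(M₁AM₂ᵀ, M₂BM₃ᵀ) M₃. -/
noncomputable def fhat {n R : ℕ} (m : ℕ) (U V W : Fin n → Fin n → Fin R → ℝ)
    (s₁ s₂ s₃ : Fin n → ℝ) (π₁ π₂ π₃ : Equiv.Perm (Fin n))
    (A B : Matrix (Fin n × Fin m) (Fin n × Fin m) ℝ) :
    Matrix (Fin n × Fin m) (Fin n × Fin m) ℝ :=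
  (1 - kappa U V W)⁻¹ •
    ((Mmat m s₁ π₁)ᵀ *
      blinf U V W (Mmat m s₁ π₁ * A * (Mmat m s₂ π₂)ᵀ) (Mmat m s₂ π₂ * B * (Mmat m s₃ π₃)ᵀ) *
      Mmat m s₃ π₃)


lemma sum_rot3 {α β γ : Type*} [Fintype α] [Fintype β] [Fintype γ] {M : Type*} [AddCommMonoid M]
    (f : α → β → γ → M) :
    ∑ a, ∑ b, ∑ c, f a b c = ∑ c, ∑ a, ∑ b, f a b c :=
  (Finset.sum_congr rfl fun _ _ => Finset.sum_comm).trans Finset.sum_comm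

lemma helper1 {α β γ δ : Type*} [Fintype α] [Fintype β] [Fintype γ] [Fintype δ]
    (w : ℝ) (f : α → β → ℝ) (g : γ → δ → ℝ) :
    w * ((∑ a, ∑ b, f a b) * (∑ c, ∑ d, g c d)) = ∑ a, ∑ b, ∑ c, ∑ d, w * (f a b * g c d) := by
  simp only [Finset.mul_sum, Finset.sum_mul]
  rw [sum_rot3]
  exact Finset.sum_congr rfl fun a _ => sum_rot3 _

lemma hY {n R m : ℕ} (U V W : Fin n → Fin n → Fin R → ℝ)
    (A B : Matrix (Fin n × Fin m) (Fin n × Fin m) ℝ) (p q : Fin n × Fin m) :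
    blinf U V W A B p q =
      ∑ k, ∑ l, ∑ k', ∑ l', Ytens U V W k l k' l' p.1 q.1 *
        ∑ z, A (k, p.2) (l, z) * B (k', z) (l', q.2) := by
  simp only [blinf, Ytens]
  calc
    ∑ r, W p.1 q.1 r *
      ∑ z, (∑ k, ∑ l, U k l r * A (k, p.2) (l, z)) *
           (∑ k', ∑ l', V k' l' r * B (k', z) (l', q.2))
      = ∑ r, ∑ z, ∑ k, ∑ l, ∑ k', ∑ l',
          W p.1 q.1 r * ((U k l r * A (k, p.2) (l, z)) * (V k' l' r * B (k', z) (l', q.2))) := by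
        refine Finset.sum_congr rfl fun r _ => ?_
        rw [Finset.mul_sum]
        exact Finset.sum_congr rfl fun z _ => helper1 _ _ _
    _ = ∑ k, ∑ l, ∑ r, ∑ z, ∑ k', ∑ l',
          W p.1 q.1 r * ((U k l r * A (k, p.2) (l, z)) * (V k' l' r * B (k', z) (l', q.2))) := by
        rw [sum_rot3]
        exact Finset.sum_congr rfl fun k _ => sum_rot3 _
    _ = ∑ k, ∑ l, ∑ k', ∑ l', ∑ r, ∑ z,
          W p.1 q.1 r * ((U k l r * A (k, p.2) (l, z)) * (V k' l' r * B (k', z) (l', q.2))) := by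
        refine Finset.sum_congr rfl fun k _ => Finset.sum_congr rfl fun l _ => ?_
        rw [sum_rot3]
        exact Finset.sum_congr rfl fun k' _ => sum_rot3 _
    _ = ∑ k, ∑ l, ∑ k', ∑ l', (∑ r, U k l r * V k' l' r * W p.1 q.1 r) *
          ∑ z, A (k, p.2) (l, z) * B (k', z) (l', q.2) := by
        refine Finset.sum_congr rfl fun k _ => Finset.sum_congr rfl fun l _ =>
          Finset.sum_congr rfl fun k' _ => Finset.sum_congr rfl fun l' _ => ?_
        rw [Finset.sum_mul_sum]
        exact Finset.sum_congr rfl fun r _ => Finset.sum_congr rfl fun z _ => by ring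

lemma hX {n m : ℕ} (A B : Matrix (Fin n × Fin m) (Fin n × Fin m) ℝ) (p q : Fin n × Fin m) :
    (∑ k, ∑ l, ∑ k', ∑ l', Xtens n k l k' l' p.1 q.1 *
        ∑ z, A (k, p.2) (l, z) * B (k', z) (l', q.2)) = (A * B) p q := by
  rw [Matrix.mul_apply]
  rw [Fintype.sum_prod_type]
  simp [Xtens, ite_mul, zero_mul, one_mul]

lemma split_prod {n m : ℕ} (g : Fin n → Fin n → ℝ) (h : Fin m → Fin m → ℝ) :
    ∑ p : Fin n × Fin m, ∑ q : Fin n × Fin m, g p.1 q.1 * h p.2 q.2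
      = (∑ i, ∑ j, g i j) * (∑ a, ∑ b, h a b) := by
  simp only [Fintype.sum_prod_type, Finset.sum_mul_sum]

lemma h3lemA {n m : ℕ} (A : Matrix (Fin n × Fin m) (Fin n × Fin m) ℝ) :
    ∑ a : Fin m, ∑ k : Fin n, ∑ l : Fin n, ∑ z : Fin m, (A (k,a) (l,z))^2
      = ∑ p, ∑ q, (A p q)^2 := by
  simp only [Fintype.sum_prod_type]
  rw [Finset.sum_comm]

lemma h3lemB {n m : ℕ} (B : Matrix (Fin n × Fin m) (Fin n × Fin m) ℝ) :
    ∑ b : Fin m, ∑ k' : Fin n, ∑ l' : Fin n, ∑ z : Fin m, (B (k',z) (l',b))^2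
      = ∑ p, ∑ q, (B p q)^2 := by
  simp only [Fintype.sum_prod_type]
  rw [Finset.sum_comm]
  refine Finset.sum_congr rfl fun k' _ => ?_
  rw [sum_rot3]
  exact Finset.sum_congr rfl fun z _ => Finset.sum_comm

lemma h3lem {n m : ℕ} (A B : Matrix (Fin n × Fin m) (Fin n × Fin m) ℝ) :
    ∑ a : Fin m, ∑ b : Fin m, ∑ t : Fin n × Fin n × Fin n × Fin n,
      (∑ z, (A (t.1,a) (t.2.1,z))^2) * (∑ z, (B (t.2.2.1,z) (t.2.2.2,b))^2)
    = (∑ p, ∑ q, (A p q)^2) * (∑ p, ∑ q, (B p q)^2) := by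
  rw [← h3lemA A, ← h3lemB B, Finset.sum_mul_sum]
  refine Finset.sum_congr rfl fun a _ => Finset.sum_congr rfl fun b _ => ?_
  simp only [Fintype.sum_prod_type]
  have := helper1 (1:ℝ) (fun k l => ∑ z, (A (k,a) (l,z))^2) (fun k' l' => ∑ z, (B (k',z) (l',b))^2)
  rw [one_mul] at this
  rw [this]
  simp only [one_mul]

lemma h2lem {n : ℕ} (e : Fin n → Fin n → Fin n → Fin n → Fin n → Fin n → ℝ) :
    ∑ i, ∑ j, ∑ t : Fin n × Fin n × Fin n × Fin n, (e t.1 t.2.1 t.2.2.1 t.2.2.2 i j)^2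
    = ∑ k, ∑ l, ∑ k', ∑ l', ∑ i, ∑ j, (e k l k' l' i j)^2 := by
  rw [sum_rot3]
  simp only [Fintype.sum_prod_type]

set_option maxHeartbeats 1000000 in
theorem stmt0 (n R m : ℕ) (hn : 0 < n) (hR : 0 < R) (hm : 1 ≤ m)
    (U V W : Fin n → Fin n → Fin R → ℝ)
    (A B : Matrix (Fin n × Fin m) (Fin n × Fin m) ℝ) :
    frob (blinf U V W A B - A * B) ≤ frob A * frob B * frob6 (Ytens U V W - Xtens n) := by
  classical
  have hD : ∀ p q : Fin n × Fin m, (blinf U V W A B - A * B) p q =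
      ∑ t : Fin n × Fin n × Fin n × Fin n,
        (Ytens U V W - Xtens n) t.1 t.2.1 t.2.2.1 t.2.2.2 p.1 q.1 *
          ∑ z, A (t.1, p.2) (t.2.1, z) * B (t.2.2.1, z) (t.2.2.2, q.2) := by
    intro p q
    rw [Matrix.sub_apply, hY U V W A B p q, ← hX A B p q]
    simp only [← Finset.sum_sub_distrib, ← sub_mul, Fintype.sum_prod_type, Pi.sub_apply]
  set SA := ∑ p, ∑ q, (A p q)^2 with hSAdef
  set SB := ∑ p, ∑ q, (B p q)^2 with hSBdef
  set SE := ∑ k, ∑ l, ∑ k', ∑ l', ∑ i, ∑ j, ((Ytens U V W - Xtens n) k l k' l' i j)^2 with hSEdef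
  have key : ∑ p, ∑ q, ((blinf U V W A B - A * B) p q)^2 ≤ SE * (SA * SB) := by
    have step1 : ∀ p q : Fin n × Fin m, ((blinf U V W A B - A * B) p q)^2 ≤
        (∑ t : Fin n × Fin n × Fin n × Fin n,
          ((Ytens U V W - Xtens n) t.1 t.2.1 t.2.2.1 t.2.2.2 p.1 q.1)^2) *
        (∑ t : Fin n × Fin n × Fin n × Fin n,
          (∑ z, (A (t.1, p.2) (t.2.1, z))^2) * (∑ z, (B (t.2.2.1, z) (t.2.2.2, q.2))^2)) := by
      intro p q
      rw [hD p q]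
      refine le_trans (Finset.sum_mul_sq_le_sq_mul_sq _ _ _) ?_
      refine mul_le_mul_of_nonneg_left (Finset.sum_le_sum fun t _ => ?_) (by positivity)
      exact Finset.sum_mul_sq_le_sq_mul_sq _ _ _
    calc ∑ p, ∑ q, ((blinf U V W A B - A * B) p q)^2
        ≤ ∑ p : Fin n × Fin m, ∑ q : Fin n × Fin m,
            (∑ t : Fin n × Fin n × Fin n × Fin n,
              ((Ytens U V W - Xtens n) t.1 t.2.1 t.2.2.1 t.2.2.2 p.1 q.1)^2) *
            (∑ t : Fin n × Fin n × Fin n × Fin n,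
              (∑ z, (A (t.1, p.2) (t.2.1, z))^2) * (∑ z, (B (t.2.2.1, z) (t.2.2.2, q.2))^2)) :=
          Finset.sum_le_sum fun p _ => Finset.sum_le_sum fun q _ => step1 p q
      _ = (∑ i, ∑ j, ∑ t : Fin n × Fin n × Fin n × Fin n,
              ((Ytens U V W - Xtens n) t.1 t.2.1 t.2.2.1 t.2.2.2 i j)^2) *
          (∑ a, ∑ b, ∑ t : Fin n × Fin n × Fin n × Fin n,
              (∑ z, (A (t.1, a) (t.2.1, z))^2) * (∑ z, (B (t.2.2.1, z) (t.2.2.2, b))^2)) :=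
          split_prod (fun i j => ∑ t : Fin n × Fin n × Fin n × Fin n,
              ((Ytens U V W - Xtens n) t.1 t.2.1 t.2.2.1 t.2.2.2 i j)^2)
            (fun a b => ∑ t : Fin n × Fin n × Fin n × Fin n,
              (∑ z, (A (t.1, a) (t.2.1, z))^2) * (∑ z, (B (t.2.2.1, z) (t.2.2.2, b))^2))
      _ = SE * (SA * SB) := by rw [h2lem, h3lem]
  have hSA : 0 ≤ SA := Finset.sum_nonneg fun _ _ => Finset.sum_nonneg fun _ _ => sq_nonneg _
  have hSB : 0 ≤ SB := Finset.sum_nonneg fun _ _ => Finset.sum_nonneg fun _ _ => sq_nonneg _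
  have hSE : 0 ≤ SE := Finset.sum_nonneg fun _ _ => Finset.sum_nonneg fun _ _ =>
    Finset.sum_nonneg fun _ _ => Finset.sum_nonneg fun _ _ =>
    Finset.sum_nonneg fun _ _ => Finset.sum_nonneg fun _ _ => sq_nonneg _
  rw [frob, frob, frob, frob6]
  calc Real.sqrt (∑ p, ∑ q, ((blinf U V W A B - A * B) p q)^2)
      ≤ Real.sqrt (SE * (SA * SB)) := Real.sqrt_le_sqrt key
    _ = Real.sqrt SA * Real.sqrt SB * Real.sqrt SE := by
        rw [Real.sqrt_mul hSE, Real.sqrt_mul hSA]; ring
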